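/- (Volkonskii–Rozanov) Let Z₁,…,Z_m be complex-valued random variables with |Z_j| ≤ 1, where Z_j is measurable with respect to F_{i_j}^{j_j} for indices 1 ≤ i₁ < j₁ < i₂ < j₂ < ⋯ < j_m ≤ n with gaps i_{l+1} − j_l ≥ k ≥ 1, in an α-mixing process with coefficient α(·). Then |E[∏_{j=1}^m Z_j] − ∏_{j=1}^m E[Z_j]| ≤ 16(m−1)α(k). -/

import Mathlib

open MeasureTheory

namespace VR

variable {Ω : Type*} {mΩ : MeasurableSpace Ω}

noncomputable def rcov (μ : Measure Ω) (X Y : Ω → ℝ) : ℝ :=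
  (∫ ω, X ω * Y ω ∂μ) - (∫ ω, X ω ∂μ) * ∫ ω, Y ω ∂μ

lemma integrable_bd (μ : Measure Ω) [IsProbabilityMeasure μ]
    {E : Type*} [NormedAddCommGroup E] {f : Ω → E} (hf : AEStronglyMeasurable f μ) (C : ℝ)
    (h : ∀ ω, ‖f ω‖ ≤ C) : Integrable f μ :=
  ⟨hf, HasFiniteIntegral.of_bounded (C := C) (Filter.Eventually.of_forall h)⟩

lemma rcov_comm (μ : Measure Ω) (X Y : Ω → ℝ) : rcov μ X Y = rcov μ Y X := by
  unfold rcov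
  rw [show (fun ω => X ω * Y ω) = fun ω => Y ω * X ω from funext fun ω => mul_comm _ _,
    mul_comm]

lemma step (μ : Measure Ω) [IsProbabilityMeasure μ]
    (𝓐 : MeasurableSpace Ω) (h𝓐 : 𝓐 ≤ mΩ)
    {X Y : Ω → ℝ} (hX : Measurable[𝓐] X) (hXbd : ∀ ω, |X ω| ≤ 1)
    (hYm : Measurable[mΩ] Y) (hYbd : ∀ ω, |Y ω| ≤ 1) :
    ∃ A : Set Ω, MeasurableSet[𝓐] A ∧
      |rcov μ X Y| ≤ 2 * |rcov μ (A.indicator fun _ => (1:ℝ)) Y| := by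
  haveI : SigmaFinite (μ.trim h𝓐) := inferInstance
  set c := ∫ ω, Y ω ∂μ with hc
  set g : Ω → ℝ := fun ω => Y ω - c with hgdef
  have hYi : Integrable Y μ := integrable_bd μ hYm.aestronglyMeasurable 1
    (fun ω => by simpa using hYbd ω)
  have hcbd : |c| ≤ 1 := by
    have h1 : ‖∫ ω, Y ω ∂μ‖ ≤ ∫ ω, ‖Y ω‖ ∂μ := norm_integral_le_integral_norm _
    have h2 : ∫ ω, ‖Y ω‖ ∂μ ≤ ∫ ω, (1:ℝ) ∂μ :=
      integral_mono hYi.norm (integrable_const 1) (fun ω => by simpa using hYbd ω)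
    simpa [hc, measure_univ] using h1.trans h2
  have hgm : Measurable[mΩ] g := hYm.sub measurable_const
  have hgbd : ∀ ω, |g ω| ≤ 2 := fun ω => by
    have h1 := hYbd ω
    simp only [hgdef]
    calc |Y ω - c| ≤ |Y ω| + |c| := abs_sub _ _
      _ ≤ 2 := by linarith
  have hgi : Integrable g μ := hYi.sub (integrable_const c)
  have hgint : ∫ ω, g ω ∂μ = 0 := by
    simp only [hgdef]
    rw [integral_sub hYi (integrable_const c)]
    simp [hc, measure_univ]
  set h : Ω → ℝ := μ[g|𝓐] with hh
  have hhm : StronglyMeasurable[𝓐] h := stronglyMeasurable_condExp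
  have hhmm : Measurable[mΩ] h := (hhm.mono h𝓐).measurable
  have hhi : Integrable h μ := integrable_condExp
  have pull : ∀ ξ : Ω → ℝ, Measurable[𝓐] ξ → (∀ ω, |ξ ω| ≤ 1) →
      ∫ ω, ξ ω * g ω ∂μ = ∫ ω, ξ ω * h ω ∂μ := by
    intro ξ hξ hξbd
    have hξm : Measurable[mΩ] ξ := hξ.mono h𝓐 le_rfl
    have h1 : Integrable (ξ * g) μ := integrable_bd μ (hξm.mul hgm).aestronglyMeasurable 2
      (fun ω => by
        have ha := hξbd ω; have hb := hgbd ω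
        have hh2 : ‖(ξ * g) ω‖ = |ξ ω| * |g ω| := by simp [abs_mul]
        rw [hh2]
        nlinarith [abs_nonneg (ξ ω), abs_nonneg (g ω)])
    have h2 := condExp_mul_of_stronglyMeasurable_left hξ.stronglyMeasurable h1 hgi
    calc ∫ ω, ξ ω * g ω ∂μ = ∫ ω, (ξ * g) ω ∂μ := rfl
      _ = ∫ ω, (μ[ξ * g|𝓐]) ω ∂μ := (integral_condExp h𝓐).symm
      _ = ∫ ω, (ξ * μ[g|𝓐]) ω ∂μ := integral_congr_ae h2
      _ = ∫ ω, ξ ω * h ω ∂μ := rfl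
  set A : Set Ω := {ω | 0 ≤ h ω} with hA
  have hAmeas : MeasurableSet[𝓐] A := measurableSet_le measurable_const hhm.measurable
  have hAm : MeasurableSet[mΩ] A := h𝓐 _ hAmeas
  set ι : Ω → ℝ := A.indicator fun _ => (1:ℝ) with hι
  have hιm : Measurable[mΩ] ι := measurable_const.indicator hAm
  have hιbd : ∀ ω, |ι ω| ≤ 1 := by
    intro ω; by_cases hω : ω ∈ A <;> simp [hι, Set.indicator_of_mem, Set.indicator_of_notMem, hω]
  set ξ : Ω → ℝ := fun ω => 2 * ι ω - 1 with hξdef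
  have hξ𝓐 : Measurable[𝓐] ξ :=
    ((measurable_const.indicator hAmeas).const_mul 2).sub measurable_const
  have hξbd : ∀ ω, |ξ ω| ≤ 1 := by
    intro ω; by_cases hω : ω ∈ A <;>
      simp [hξdef, hι, Set.indicator_of_mem, Set.indicator_of_notMem, hω] <;> norm_num
  have hξh : ∀ ω, ξ ω * h ω = |h ω| := by
    intro ω; by_cases hω : ω ∈ A
    · have h0 : 0 ≤ h ω := hω
      simp [hξdef, hι, Set.indicator_of_mem hω, abs_of_nonneg h0]; ring
    · have h0 : h ω < 0 := not_le.1 hω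
      simp [hξdef, hι, Set.indicator_of_notMem hω, abs_of_neg h0]
  -- generic: ∫ X' * g = rcov μ X' Y
  have e1 : ∀ X' : Ω → ℝ, Measurable[mΩ] X' → (∀ ω, |X' ω| ≤ 1) →
      ∫ ω, X' ω * g ω ∂μ = rcov μ X' Y := by
    intro X' hm' hbd'
    have hXi : Integrable X' μ := integrable_bd μ hm'.aestronglyMeasurable 1
      (fun ω => by simpa using hbd' ω)
    have hXYi : Integrable (fun ω => X' ω * Y ω) μ :=
      integrable_bd μ (hm'.mul hYm).aestronglyMeasurable 1
        (fun ω => by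
          have ha := hbd' ω; have hb := hYbd ω
          have hh2 : ‖X' ω * Y ω‖ = |X' ω| * |Y ω| := by simp [abs_mul]
          rw [hh2]
          nlinarith [abs_nonneg (X' ω), abs_nonneg (Y ω)])
    have hfe : (fun ω => X' ω * g ω) = fun ω => X' ω * Y ω - X' ω * c := by
      funext ω; simp only [hgdef]; ring
    rw [hfe, integral_sub hXYi (hXi.mul_const c), integral_mul_const]
    rfl
  refine ⟨A, hAmeas, ?_⟩
  have hXm : Measurable[mΩ] X := hX.mono h𝓐 le_rfl
  have hXhi : Integrable (fun ω => X ω * h ω) μ :=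
    hhi.bdd_mul (c := 1) hXm.aestronglyMeasurable (Filter.Eventually.of_forall fun ω => by simpa using hXbd ω)
  have step1 : |rcov μ X Y| ≤ ∫ ω, |h ω| ∂μ := by
    rw [← e1 X hXm hXbd, pull X hX hXbd]
    calc |∫ ω, X ω * h ω ∂μ| ≤ ∫ ω, |X ω * h ω| ∂μ :=
          norm_integral_le_integral_norm (μ := μ) fun ω => X ω * h ω
      _ ≤ ∫ ω, |h ω| ∂μ := by
          refine integral_mono hXhi.abs hhi.abs (fun ω => ?_)
          rw [abs_mul]
          have := hXbd ω
          nlinarith [abs_nonneg (h ω)]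
  have step2 : ∫ ω, |h ω| ∂μ = 2 * rcov μ ι Y := by
    have h1 : ∫ ω, |h ω| ∂μ = ∫ ω, ξ ω * h ω ∂μ :=
      integral_congr_ae (Filter.Eventually.of_forall fun ω => (hξh ω).symm)
    rw [h1, ← pull ξ hξ𝓐 hξbd]
    have h2 : (fun ω => ξ ω * g ω) = fun ω => 2 * (ι ω * g ω) - g ω := by
      funext ω; simp only [hξdef]; ring
    have hιgi : Integrable (fun ω => ι ω * g ω) μ := hgi.bdd_mul (c := 1) hιm.aestronglyMeasurable
      (Filter.Eventually.of_forall fun ω => by simpa using hιbd ω)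
    rw [h2, integral_sub (hιgi.const_mul 2) hgi, integral_const_mul, hgint,
      e1 ι hιm hιbd]
    ring
  calc |rcov μ X Y| ≤ ∫ ω, |h ω| ∂μ := step1
    _ = 2 * rcov μ ι Y := step2
    _ ≤ 2 * |rcov μ ι Y| := by have := le_abs_self (rcov μ ι Y); linarith
lemma int_ind {Ω' : Type*} {m' : MeasurableSpace Ω'} (μ : Measure Ω') {s : Set Ω'}
    (hs : MeasurableSet s) : ∫ ω, s.indicator (fun _ => (1:ℝ)) ω ∂μ = (μ s).toReal := by
  rw [integral_indicator_const (1:ℝ) hs]; simp [Measure.real]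

lemma int_re {Ω' : Type*} {m' : MeasurableSpace Ω'} (μ : Measure Ω') {f : Ω' → ℂ}
    (hf : Integrable f μ) : (∫ ω, f ω ∂μ).re = ∫ ω, (f ω).re ∂μ := by
  simpa using (integral_re hf).symm

lemma int_sub {Ω' : Type*} {m' : MeasurableSpace Ω'} (μ : Measure Ω') {f g : Ω' → ℝ}
    (hf : Integrable f μ) (hg : Integrable g μ) :
    ∫ ω, (f ω - g ω) ∂μ = (∫ ω, f ω ∂μ) - ∫ ω, g ω ∂μ :=
  integral_sub hf hg

lemma int_add {Ω' : Type*} {m' : MeasurableSpace Ω'} (μ : Measure Ω') {f g : Ω' → ℝ}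
    (hf : Integrable f μ) (hg : Integrable g μ) :
    ∫ ω, (f ω + g ω) ∂μ = (∫ ω, f ω ∂μ) + ∫ ω, g ω ∂μ :=
  integral_add hf hg

lemma int_im {Ω' : Type*} {m' : MeasurableSpace Ω'} (μ : Measure Ω') {f : Ω' → ℂ}
    (hf : Integrable f μ) : (∫ ω, f ω ∂μ).im = ∫ ω, (f ω).im ∂μ := by
  simpa using (integral_im hf).symm

lemma real_cov (μ : Measure Ω) [IsProbabilityMeasure μ]
    (𝓐 𝓑 : MeasurableSpace Ω) (h𝓐 : 𝓐 ≤ mΩ) (h𝓑 : 𝓑 ≤ mΩ) (α : ℝ)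
    (hαs : ∀ A B : Set Ω, MeasurableSet[𝓐] A → MeasurableSet[𝓑] B →
      |(μ (A ∩ B)).toReal - (μ A).toReal * (μ B).toReal| ≤ α)
    {X Y : Ω → ℝ} (hX : Measurable[𝓐] X) (hXbd : ∀ ω, |X ω| ≤ 1)
    (hY : Measurable[𝓑] Y) (hYbd : ∀ ω, |Y ω| ≤ 1) :
    |rcov μ X Y| ≤ 4 * α := by
  obtain ⟨A, hA, h1⟩ := step μ 𝓐 h𝓐 hX hXbd (hY.mono h𝓑 le_rfl) hYbd
  have hιbd : ∀ ω, |Set.indicator A (fun _ => (1:ℝ)) ω| ≤ 1 := by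
    intro ω; by_cases hω : ω ∈ A <;>
      simp [Set.indicator_of_mem, Set.indicator_of_notMem, hω]
  obtain ⟨B, hB, h2⟩ := step μ 𝓑 h𝓑 hY hYbd
    (measurable_const.indicator (h𝓐 _ hA)) hιbd
  have hBA : rcov μ (B.indicator fun _ => (1:ℝ)) (A.indicator fun _ => (1:ℝ)) =
      (μ (A ∩ B)).toReal - (μ A).toReal * (μ B).toReal := by
    unfold rcov
    have hfe : (fun ω => B.indicator (fun _ => (1:ℝ)) ω * A.indicator (fun _ => (1:ℝ)) ω)
        = (A ∩ B).indicator fun _ => (1:ℝ) := by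
      funext ω
      by_cases h1 : ω ∈ B <;> by_cases h2 : ω ∈ A <;>
        simp [Set.indicator, h1, h2]
    rw [hfe, int_ind μ ((h𝓐 _ hA).inter (h𝓑 _ hB)),
      int_ind μ (h𝓑 _ hB), int_ind μ (h𝓐 _ hA)]
    ring
  calc |rcov μ X Y| ≤ 2 * |rcov μ (A.indicator fun _ => (1:ℝ)) Y| := h1
    _ = 2 * |rcov μ Y (A.indicator fun _ => (1:ℝ))| := by rw [rcov_comm]
    _ ≤ 2 * (2 * |rcov μ (B.indicator fun _ => (1:ℝ)) (A.indicator fun _ => (1:ℝ))|) := by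
        linarith [h2]
    _ = 4 * |(μ (A ∩ B)).toReal - (μ A).toReal * (μ B).toReal| := by rw [hBA]; ring
    _ ≤ 4 * α := by linarith [hαs A B hA hB]

lemma complex_cov (μ : Measure Ω) [IsProbabilityMeasure μ]
    (𝓐 𝓑 : MeasurableSpace Ω) (h𝓐 : 𝓐 ≤ mΩ) (h𝓑 : 𝓑 ≤ mΩ) (α : ℝ)
    (hαs : ∀ A B : Set Ω, MeasurableSet[𝓐] A → MeasurableSet[𝓑] B →
      |(μ (A ∩ B)).toReal - (μ A).toReal * (μ B).toReal| ≤ α)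
    {Z W : Ω → ℂ} (hZ : Measurable[𝓐] Z) (hZbd : ∀ ω, ‖Z ω‖ ≤ 1)
    (hW : Measurable[𝓑] W) (hWbd : ∀ ω, ‖W ω‖ ≤ 1) :
    ‖(∫ ω, Z ω * W ω ∂μ) - (∫ ω, Z ω ∂μ) * ∫ ω, W ω ∂μ‖ ≤ 16 * α := by
  set Z1 : Ω → ℝ := fun ω => (Z ω).re with hZ1
  set Z2 : Ω → ℝ := fun ω => (Z ω).im with hZ2
  set W1 : Ω → ℝ := fun ω => (W ω).re with hW1
  set W2 : Ω → ℝ := fun ω => (W ω).im with hW2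
  have hZm : Measurable[mΩ] Z := hZ.mono h𝓐 le_rfl
  have hWm : Measurable[mΩ] W := hW.mono h𝓑 le_rfl
  have hZ1m : Measurable[𝓐] Z1 := Complex.measurable_re.comp hZ
  have hZ2m : Measurable[𝓐] Z2 := Complex.measurable_im.comp hZ
  have hW1m : Measurable[𝓑] W1 := Complex.measurable_re.comp hW
  have hW2m : Measurable[𝓑] W2 := Complex.measurable_im.comp hW
  have hZ1bd : ∀ ω, |Z1 ω| ≤ 1 := fun ω => (Complex.abs_re_le_norm _).trans (hZbd ω)
  have hZ2bd : ∀ ω, |Z2 ω| ≤ 1 := fun ω => (Complex.abs_im_le_norm _).trans (hZbd ω)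
  have hW1bd : ∀ ω, |W1 ω| ≤ 1 := fun ω => (Complex.abs_re_le_norm _).trans (hWbd ω)
  have hW2bd : ∀ ω, |W2 ω| ≤ 1 := fun ω => (Complex.abs_im_le_norm _).trans (hWbd ω)
  have hZi : Integrable Z μ := integrable_bd μ hZm.aestronglyMeasurable 1
    (fun ω => by simpa using hZbd ω)
  have hWi : Integrable W μ := integrable_bd μ hWm.aestronglyMeasurable 1
    (fun ω => by simpa using hWbd ω)
  have hZWi : Integrable (fun ω => Z ω * W ω) μ :=
    integrable_bd μ (hZm.mul hWm).aestronglyMeasurable 1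
      (fun ω => by
        have := hZbd ω; have := hWbd ω
        simp only [norm_mul]
        nlinarith [norm_nonneg (Z ω), norm_nonneg (W ω)])
  -- bounded real integrability
  have hint : ∀ (f : Ω → ℝ), Measurable[mΩ] f → (∀ ω, |f ω| ≤ 1) → Integrable f μ :=
    fun f hm hbd => integrable_bd μ hm.aestronglyMeasurable 1 (fun ω => by simpa using hbd ω)
  have hmul : ∀ (f g : Ω → ℝ), Measurable[mΩ] f → Measurable[mΩ] g → (∀ ω, |f ω| ≤ 1) →
      (∀ ω, |g ω| ≤ 1) → Integrable (fun ω => f ω * g ω) μ := by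
    intro f g hf hg hbf hbg
    refine integrable_bd μ (hf.mul hg).aestronglyMeasurable 1 (fun ω => ?_)
    have := hbf ω; have := hbg ω
    simp only [Real.norm_eq_abs, abs_mul]
    nlinarith [abs_nonneg (f ω), abs_nonneg (g ω)]
  have hZ1m' : Measurable[mΩ] Z1 := hZ1m.mono h𝓐 le_rfl
  have hZ2m' : Measurable[mΩ] Z2 := hZ2m.mono h𝓐 le_rfl
  have hW1m' : Measurable[mΩ] W1 := hW1m.mono h𝓑 le_rfl
  have hW2m' : Measurable[mΩ] W2 := hW2m.mono h𝓑 le_rfl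
  -- re and im of integrals
  have hreZ : (∫ ω, Z ω ∂μ).re = ∫ ω, Z1 ω ∂μ := by
    exact int_re μ hZi
  have himZ : (∫ ω, Z ω ∂μ).im = ∫ ω, Z2 ω ∂μ := by
    exact int_im μ hZi
  have hreW : (∫ ω, W ω ∂μ).re = ∫ ω, W1 ω ∂μ := by
    exact int_re μ hWi
  have himW : (∫ ω, W ω ∂μ).im = ∫ ω, W2 ω ∂μ := by
    exact int_im μ hWi
  have hreZW : (∫ ω, Z ω * W ω ∂μ).re
      = (∫ ω, Z1 ω * W1 ω ∂μ) - ∫ ω, Z2 ω * W2 ω ∂μ := by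
    have h1 : (∫ ω, Z ω * W ω ∂μ).re = ∫ ω, (Z ω * W ω).re ∂μ := by
      exact int_re μ hZWi
    rw [h1, ← int_sub μ (hmul _ _ hZ1m' hW1m' hZ1bd hW1bd) (hmul _ _ hZ2m' hW2m' hZ2bd hW2bd)]
    exact integral_congr_ae (Filter.Eventually.of_forall fun ω => by
      simp [Complex.mul_re, hZ1, hZ2, hW1, hW2])
  have himZW : (∫ ω, Z ω * W ω ∂μ).im
      = (∫ ω, Z1 ω * W2 ω ∂μ) + ∫ ω, Z2 ω * W1 ω ∂μ := by
    have h1 : (∫ ω, Z ω * W ω ∂μ).im = ∫ ω, (Z ω * W ω).im ∂μ := by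
      exact int_im μ hZWi
    rw [h1, ← int_add μ (hmul _ _ hZ1m' hW2m' hZ1bd hW2bd) (hmul _ _ hZ2m' hW1m' hZ2bd hW1bd)]
    exact integral_congr_ae (Filter.Eventually.of_forall fun ω => by
      simp [Complex.mul_im, hZ1, hZ2, hW1, hW2])
  set D := (∫ ω, Z ω * W ω ∂μ) - (∫ ω, Z ω ∂μ) * ∫ ω, W ω ∂μ with hD
  have hDre : D.re = rcov μ Z1 W1 - rcov μ Z2 W2 := by
    simp only [hD, Complex.sub_re, Complex.mul_re, hreZW, hreZ, himZ, hreW, himW]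
    unfold rcov
    ring
  have hDim : D.im = rcov μ Z1 W2 + rcov μ Z2 W1 := by
    simp only [hD, Complex.sub_im, Complex.mul_im, himZW, hreZ, himZ, hreW, himW]
    unfold rcov
    ring
  have b11 := real_cov μ 𝓐 𝓑 h𝓐 h𝓑 α hαs hZ1m hZ1bd hW1m hW1bd
  have b22 := real_cov μ 𝓐 𝓑 h𝓐 h𝓑 α hαs hZ2m hZ2bd hW2m hW2bd
  have b12 := real_cov μ 𝓐 𝓑 h𝓐 h𝓑 α hαs hZ1m hZ1bd hW2m hW2bd
  have b21 := real_cov μ 𝓐 𝓑 h𝓐 h𝓑 α hαs hZ2m hZ2bd hW1m hW1bd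
  calc ‖D‖ ≤ |D.re| + |D.im| := Complex.norm_le_abs_re_add_abs_im D
    _ ≤ (|rcov μ Z1 W1| + |rcov μ Z2 W2|) + (|rcov μ Z1 W2| + |rcov μ Z2 W1|) := by
        rw [hDre, hDim]
        have := abs_sub (rcov μ Z1 W1) (rcov μ Z2 W2)
        have := abs_add_le (rcov μ Z1 W2) (rcov μ Z2 W1)
        linarith
    _ ≤ 16 * α := by linarith
lemma main (μ : Measure Ω) [IsProbabilityMeasure μ] (F : ℕ → ℕ → MeasurableSpace Ω)
    (hF : ∀ a b, F a b ≤ mΩ)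
    (hFmono : ∀ a b a' b', a' ≤ a → b ≤ b' → F a b ≤ F a' b')
    (a : ℕ → ℝ)
    (hmix : ∀ k l, 1 ≤ k → ∀ A B : Set Ω, MeasurableSet[F 1 l] A →
      MeasurableSet[⨆ m', F (l + k) m'] B →
      |(μ (A ∩ B)).toReal - (μ A).toReal * (μ B).toReal| ≤ a k)
    (k : ℕ) (hk : 1 ≤ k) (m : ℕ) (hm : 1 ≤ m) :
    ∀ i j : Fin m → ℕ, (∀ l, 1 ≤ i l ∧ i l < j l) →
      (∀ l : Fin m, ∀ h : l.val + 1 < m, j l + k ≤ i ⟨l.val + 1, h⟩) →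
      ∀ Z : Fin m → Ω → ℂ, (∀ l, Measurable[F (i l) (j l)] (Z l)) →
      (∀ l ω, ‖Z l ω‖ ≤ 1) →
      ‖(∫ ω, ∏ l, Z l ω ∂μ) - ∏ l, ∫ ω, Z l ω ∂μ‖ ≤ 16 * ((m : ℝ) - 1) * a k := by
  induction m, hm using Nat.le_induction with
  | base =>
    intro i j hij hgap Z hZmeas hZbd
    simp [Fin.prod_univ_one]
  | succ m hm IH =>
    intro i j hij hgap Z hZmeas hZbd
    have hα : 0 ≤ a k := by
      have h0 := hmix k 1 hk ∅ ∅ (@MeasurableSet.empty _ (F 1 1)) (@MeasurableSet.empty _ (⨆ m', F (1 + k) m'))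
      simpa using h0
    have h𝓐 : F 1 (j 0) ≤ mΩ := hF _ _
    have h𝓑 : (⨆ m', F (j 0 + k) m') ≤ mΩ := iSup_le fun m' => hF _ _
    have hchain : ∀ v : ℕ, ∀ hv : v < m, j 0 + k ≤ i ⟨v + 1, Nat.succ_lt_succ hv⟩ := by
      intro v
      induction v with
      | zero => intro hv; exact hgap 0 (Nat.succ_lt_succ hv)
      | succ v ihv =>
        intro hv
        have h1 : j 0 + k ≤ i ⟨v + 1, Nat.succ_lt_succ (Nat.lt_of_succ_lt hv)⟩ :=
          ihv (Nat.lt_of_succ_lt hv)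
        have h2 : i ⟨v + 1, Nat.succ_lt_succ (Nat.lt_of_succ_lt hv)⟩
            < j ⟨v + 1, Nat.succ_lt_succ (Nat.lt_of_succ_lt hv)⟩ :=
          (hij _).2
        have h3 : j ⟨v + 1, Nat.succ_lt_succ (Nat.lt_of_succ_lt hv)⟩ + k
            ≤ i ⟨v + 2, Nat.succ_lt_succ hv⟩ :=
          hgap ⟨v + 1, Nat.succ_lt_succ (Nat.lt_of_succ_lt hv)⟩ (Nat.succ_lt_succ hv)
        exact le_trans h1 (le_trans (le_of_lt h2) (le_trans (Nat.le_add_right _ k) h3))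
    have hWmeas : Measurable[⨆ m', F (j 0 + k) m'] fun ω => ∏ l : Fin m, Z l.succ ω := by
      apply Finset.measurable_prod
      intro l _
      have hle : F (i l.succ) (j l.succ) ≤ ⨆ m', F (j 0 + k) m' := by
        refine le_trans (hFmono _ _ _ _ ?_ le_rfl)
          (le_iSup (fun m' => F (j 0 + k) m') (j l.succ))
        exact hchain l.val l.isLt
      exact (hZmeas l.succ).mono hle le_rfl
    have hWbd : ∀ ω, ‖∏ l : Fin m, Z l.succ ω‖ ≤ 1 := by
      intro ω
      calc ‖∏ l : Fin m, Z l.succ ω‖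
          = ∏ l : Fin m, ‖Z l.succ ω‖ := norm_prod _ _
        _ ≤ 1 := Finset.prod_le_one (fun l _ => norm_nonneg _)
            (fun l _ => hZbd _ ω)
    have hZ0 : Measurable[F 1 (j 0)] (Z 0) :=
      (hZmeas 0).mono (hFmono _ _ _ _ (hij 0).1 le_rfl) le_rfl
    have key := complex_cov μ (F 1 (j 0)) (⨆ m', F (j 0 + k) m') h𝓐 h𝓑 (a k)
      (fun A B hA hB => hmix k (j 0) hk A B hA hB) hZ0 (hZbd 0) hWmeas hWbd
    have hIH := IH (fun l => i l.succ) (fun l => j l.succ) (fun l => hij l.succ)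
      (fun l h => hgap l.succ (Nat.succ_lt_succ h))
      (fun l => Z l.succ) (fun l => hZmeas l.succ) (fun l ω => hZbd l.succ ω)
    have hZm' : ∀ l : Fin (m + 1), Measurable[mΩ] (Z l) :=
      fun l => (hZmeas l).mono (hF _ _) le_rfl
    have hZ0i : Integrable (Z 0) μ := integrable_bd μ (hZm' 0).aestronglyMeasurable 1
      (fun ω => by simpa using hZbd 0 ω)
    have hpbd : ‖∫ ω, Z 0 ω ∂μ‖ ≤ 1 := by
      have h1 : ‖∫ ω, Z 0 ω ∂μ‖ ≤ ∫ ω, ‖Z 0 ω‖ ∂μ := norm_integral_le_integral_norm _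
      have h2 : ∫ ω, ‖Z 0 ω‖ ∂μ ≤ ∫ ω, (1:ℝ) ∂μ :=
        integral_mono hZ0i.norm (integrable_const 1)
          (fun ω => by simpa using hZbd 0 ω)
      simpa [measure_univ] using h1.trans h2
    have hintprod : ∫ ω, ∏ l : Fin (m + 1), Z l ω ∂μ
        = ∫ ω, Z 0 ω * ∏ l : Fin m, Z l.succ ω ∂μ :=
      integral_congr_ae (Filter.Eventually.of_forall fun ω => Fin.prod_univ_succ _)
    have hprodE : ∏ l : Fin (m + 1), (∫ ω, Z l ω ∂μ)
        = (∫ ω, Z 0 ω ∂μ) * ∏ l : Fin m, ∫ ω, Z l.succ ω ∂μ :=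
      Fin.prod_univ_succ _
    calc ‖(∫ ω, ∏ l, Z l ω ∂μ) - ∏ l, ∫ ω, Z l ω ∂μ‖
        = ‖((∫ ω, Z 0 ω * ∏ l : Fin m, Z l.succ ω ∂μ)
              - (∫ ω, Z 0 ω ∂μ) * ∫ ω, ∏ l : Fin m, Z l.succ ω ∂μ)
            + (∫ ω, Z 0 ω ∂μ) * ((∫ ω, ∏ l : Fin m, Z l.succ ω ∂μ)
              - ∏ l : Fin m, ∫ ω, Z l.succ ω ∂μ)‖ := by
          rw [hintprod, hprodE]; congr 1; ring
      _ ≤ ‖(∫ ω, Z 0 ω * ∏ l : Fin m, Z l.succ ω ∂μ)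
              - (∫ ω, Z 0 ω ∂μ) * ∫ ω, ∏ l : Fin m, Z l.succ ω ∂μ‖
          + ‖(∫ ω, Z 0 ω ∂μ) * ((∫ ω, ∏ l : Fin m, Z l.succ ω ∂μ)
              - ∏ l : Fin m, ∫ ω, Z l.succ ω ∂μ)‖ := norm_add_le _ _
      _ ≤ 16 * a k + 1 * (16 * ((m : ℝ) - 1) * a k) := by
          refine add_le_add key ?_
          rw [norm_mul]
          exact mul_le_mul hpbd hIH (norm_nonneg _) zero_le_one
      _ ≤ 16 * (((m + 1 : ℕ) : ℝ) - 1) * a k := by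
          push_cast
          have h1 : (1:ℝ) ≤ (m:ℝ) := by exact_mod_cast hm
          nlinarith

end VR

/-- Volkonskii–Rozanov lemma: if `Z₁,…,Z_m` are complex random variables with `|Z_j| ≤ 1`,
`Z_j` measurable w.r.t. `F(i_j, j_j)` with interleaved index blocks separated by gaps `≥ k`
in an α-mixing process with mixing bound `a(k)`, then
`|E ∏ Z_j − ∏ E Z_j| ≤ 16 (m−1) a(k)`. -/
theorem stmt4 {Ω : Type*} [MeasurableSpace Ω] (μ : Measure Ω) [IsProbabilityMeasure μ]
    (F : ℕ → ℕ → MeasurableSpace Ω) (hF : ∀ a b, F a b ≤ ‹MeasurableSpace Ω›)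
    (hFmono : ∀ a b a' b', a' ≤ a → b ≤ b' → F a b ≤ F a' b')
    (a : ℕ → ℝ)
    (hmix : ∀ k l, 1 ≤ k → ∀ A B : Set Ω, MeasurableSet[F 1 l] A →
      MeasurableSet[⨆ m', F (l + k) m'] B →
      |(μ (A ∩ B)).toReal - (μ A).toReal * (μ B).toReal| ≤ a k)
    (m n k : ℕ) (hm : 1 ≤ m) (hk : 1 ≤ k)
    (i j : Fin m → ℕ)
    (hij : ∀ l : Fin m, 1 ≤ i l ∧ i l < j l)
    (hgap : ∀ l : Fin m, ∀ h : l.val + 1 < m, j l + k ≤ i ⟨l.val + 1, h⟩)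
    (hjn : ∀ l : Fin m, j l ≤ n)
    (Z : Fin m → Ω → ℂ)
    (hZmeas : ∀ l, Measurable[F (i l) (j l)] (Z l))
    (hZbd : ∀ l ω, ‖Z l ω‖ ≤ 1) :
    ‖(∫ ω, ∏ l, Z l ω ∂μ) - ∏ l, ∫ ω, Z l ω ∂μ‖
      ≤ 16 * ((m : ℝ) - 1) * a k :=
  VR.main μ F hF hFmono a hmix k hk m hm i j hij hgap Z hZmeas hZbd
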